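/- Let Ω be a measurable space and μ a probability measure on Ω × Bool, with λ, ν, η, and the Bayes classifier g* defined as usual. Let ηₙ : Ω → ℝ be any measurable function, and define the plug-in classifier gₙ : Ω → Bool by gₙ(x) = true if and only if ηₙ(x) ≥ 1/2. Then μ{(x,y) : gₙ(x) ≠ y} − μ{(x,y) : g*(x) ≠ y} ≤ 2 ∫ |η(x) − ηₙ(x)| dλ(x). -/

import Mathlib

open MeasureTheory
open scoped ENNReal

/-- The excess misclassification error of a plug-in classifier `gₙ` built from an
estimate `ηₙ` of the regression function `η` is at most `2 ∫ |η - ηₙ| dλ`. -/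
theorem plugin_classifier_L1_bound
    {Ω : Type*} [MeasurableSpace Ω]
    (μ : Measure (Ω × Bool)) [IsProbabilityMeasure μ]
    (lam : Measure Ω) (hlam : lam = μ.map Prod.fst)
    (ν : Measure Ω)
    (hν : ∀ A : Set Ω, MeasurableSet A → ν A = μ (A ×ˢ ({true} : Set Bool)))
    (η : Ω → ℝ) (hη : ∀ x, η x = (ν.rnDeriv lam x).toReal)
    (gstar : Ω → Bool) (hgstar : ∀ x, gstar x = true ↔ (1/2 : ℝ) ≤ η x)
    (ηn : Ω → ℝ) (hηn : Measurable ηn)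
    (gn : Ω → Bool) (hgn : ∀ x, gn x = true ↔ (1/2 : ℝ) ≤ ηn x) :
    μ {p : Ω × Bool | gn p.1 ≠ p.2} - μ {p : Ω × Bool | gstar p.1 ≠ p.2}
      ≤ 2 * ∫⁻ x, ENNReal.ofReal |η x - ηn x| ∂lam := by
  have hfst : Measurable (Prod.fst : Ω × Bool → Ω) := measurable_fst
  haveI hlamfin : IsProbabilityMeasure lam := by
    rw [hlam]; exact Measure.isProbabilityMeasure_map hfst.aemeasurable
  have hlam_apply : ∀ B : Set Ω, MeasurableSet B →
      lam B = μ (B ×ˢ (Set.univ : Set Bool)) := by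
    intro B hB
    rw [hlam, Measure.map_apply hfst hB]
    congr 1
    ext p
    simp
  have hνle : ν ≤ lam := by
    rw [Measure.le_iff]
    intro s hs
    rw [hν s hs, hlam_apply s hs]
    exact measure_mono (fun p hp => ⟨hp.1, Set.mem_univ _⟩)
  haveI : IsFiniteMeasure ν := isFiniteMeasure_of_le lam hνle
  have hac : ν ≪ lam := Measure.absolutelyContinuous_of_le hνle
  set f := ν.rnDeriv lam with hf
  have hmf : Measurable f := Measure.measurable_rnDeriv ν lam
  have hwd : lam.withDensity f = ν := Measure.withDensity_rnDeriv_eq ν lam hac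
  have hle1 : f ≤ᵐ[lam] 1 := Measure.rnDeriv_le_one_of_le hνle
  have hlt : ∀ᵐ x ∂lam, f x < ⊤ := Measure.rnDeriv_lt_top ν lam
  have hηm : Measurable η := by
    have : η = fun x => (f x).toReal := funext hη
    rw [this]; exact hmf.ennreal_toReal
  have hνint : ∀ B : Set Ω, MeasurableSet B → ν B = ∫⁻ x in B, f x ∂lam := by
    intro B hB
    rw [← hwd, withDensity_apply _ hB]
  -- key error formula
  have key : ∀ g : Ω → Bool, MeasurableSet {x | g x = true} →
      μ {p : Ω × Bool | g p.1 ≠ p.2} = ∫⁻ x, (if g x then 1 - f x else f x) ∂lam := by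
    intro g hS
    have hset : {p : Ω × Bool | g p.1 ≠ p.2}
        = ({x | g x = true} ×ˢ ({false} : Set Bool))
          ∪ ({x | g x = true}ᶜ ×ˢ ({true} : Set Bool)) := by
      ext ⟨x, b⟩
      cases hb : g x <;> cases b <;> simp [hb]
    have hdisj : Disjoint ({x | g x = true} ×ˢ ({false} : Set Bool))
        ({x | g x = true}ᶜ ×ˢ ({true} : Set Bool)) := by
      rw [Set.disjoint_left]
      rintro ⟨x, b⟩ h1 h2
      simp only [Set.mem_prod, Set.mem_singleton_iff] at h1 h2
      rw [h1.2] at h2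
      exact absurd h2.2 (by simp)
    have hνS : ν {x | g x = true} ≠ ⊤ := measure_ne_top ν _
    have h2 : μ ({x | g x = true} ×ˢ ({false} : Set Bool))
        = lam {x | g x = true} - ν {x | g x = true} := by
      have hd : Disjoint ({x | g x = true} ×ˢ ({true} : Set Bool))
          ({x | g x = true} ×ˢ ({false} : Set Bool)) := by
        rw [Set.disjoint_left]
        rintro ⟨x, b⟩ h1 h2
        simp only [Set.mem_prod, Set.mem_singleton_iff] at h1 h2
        rw [h1.2] at h2
        exact absurd h2.2 (by simp)
      have hadd : ν {x | g x = true} + μ ({x | g x = true} ×ˢ ({false} : Set Bool))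
          = lam {x | g x = true} := by
        rw [hν _ hS, hlam_apply _ hS,
          ← measure_union hd (hS.prod (measurableSet_singleton false))]
        congr 1
        ext ⟨x, b⟩
        cases b <;> simp
      rw [← hadd, ENNReal.add_sub_cancel_left hνS]
    rw [hset, measure_union hdisj (hS.compl.prod (measurableSet_singleton true)),
      h2, ← hν _ hS.compl]
    -- now compute the lintegral
    rw [← lintegral_add_compl (fun x => if g x then 1 - f x else f x) hS]
    have e1 : ∫⁻ x in {x | g x = true}, (if g x then 1 - f x else f x) ∂lam
        = ∫⁻ x in {x | g x = true}, (1 - f x) ∂lam := by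
      refine setLIntegral_congr_fun hS ?_
      intro x hx
      simp only [Set.mem_setOf_eq] at hx
      simp [hx]
    have e2 : ∫⁻ x in {x | g x = true}ᶜ, (if g x then 1 - f x else f x) ∂lam
        = ∫⁻ x in {x | g x = true}ᶜ, f x ∂lam := by
      refine setLIntegral_congr_fun hS.compl ?_
      intro x hx
      simp only [Set.mem_compl_iff, Set.mem_setOf_eq, Bool.not_eq_true] at hx
      simp [hx]
    have e3 : ∫⁻ x in {x | g x = true}, (1 - f x) ∂lam
        = lam {x | g x = true} - ν {x | g x = true} := by
      rw [lintegral_sub hmf]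
      · rw [setLIntegral_one, hνint _ hS]
      · rw [← hνint _ hS]; exact hνS
      · exact ae_restrict_of_ae hle1
    rw [e1, e2, e3, ← hνint _ hS.compl]
  -- measurability of the classifier sets
  have hSn : MeasurableSet {x | gn x = true} := by
    have : {x | gn x = true} = ηn ⁻¹' Set.Ici (1/2 : ℝ) := by
      ext x; simp [hgn x, Set.mem_Ici]
    rw [this]; exact hηn measurableSet_Ici
  have hSs : MeasurableSet {x | gstar x = true} := by
    have : {x | gstar x = true} = η ⁻¹' Set.Ici (1/2 : ℝ) := by
      ext x; simp [hgstar x, Set.mem_Ici]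
    rw [this]; exact hηm measurableSet_Ici
  rw [key gn hSn, key gstar hSs, tsub_le_iff_right]
  have hm' : Measurable fun x => ENNReal.ofReal |η x - ηn x| :=
    ((hηm.sub hηn).abs).ennreal_ofReal
  have hmabs : Measurable fun x => (2 : ℝ≥0∞) * ENNReal.ofReal |η x - ηn x| :=
    hm'.const_mul 2
  calc ∫⁻ x, (if gn x then 1 - f x else f x) ∂lam
      ≤ ∫⁻ x, ((2 : ℝ≥0∞) * ENNReal.ofReal |η x - ηn x|
          + (if gstar x then 1 - f x else f x)) ∂lam := by
        refine lintegral_mono_ae ?_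
        filter_upwards [hle1, hlt] with x hx1 hx2
        have hxt : f x = ENNReal.ofReal (η x) := by
          rw [hη x, ENNReal.ofReal_toReal hx2.ne]
        have hη0 : 0 ≤ η x := by rw [hη x]; exact ENNReal.toReal_nonneg
        have hη1 : η x ≤ 1 := by
          rw [hη x]
          exact ENNReal.toReal_le_of_le_ofReal zero_le_one (by simpa using hx1)
        have hsub : (1 : ℝ≥0∞) - f x = ENNReal.ofReal (1 - η x) := by
          rw [hxt, ENNReal.ofReal_sub _ hη0, ENNReal.ofReal_one]
        have h2e : (2 : ℝ≥0∞) * ENNReal.ofReal |η x - ηn x|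
            = ENNReal.ofReal (2 * |η x - ηn x|) := by
          rw [ENNReal.ofReal_mul (by norm_num : (0:ℝ) ≤ 2)]
          norm_num
        cases hgnx : gn x <;> cases hgsx : gstar x <;>
          (try simp only [Bool.false_eq_true, if_true, if_false, reduceIte])
        · exact le_add_self
        · -- gn false, gstar true : f x ≤ 2|..| + (1 - f x)
          have hb : ¬ (1/2 : ℝ) ≤ ηn x := by rw [← hgn x]; simp [hgnx]
          have ha : (1/2 : ℝ) ≤ η x := (hgstar x).mp hgsx
          rw [hsub, hxt, h2e, ← ENNReal.ofReal_add (by positivity) (by linarith)]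
          refine ENNReal.ofReal_le_ofReal ?_
          have := le_abs_self (η x - ηn x)
          nlinarith [this]
        · -- gn true, gstar false : 1 - f x ≤ 2|..| + f x
          have hb : (1/2 : ℝ) ≤ ηn x := (hgn x).mp hgnx
          have ha : ¬ (1/2 : ℝ) ≤ η x := by rw [← hgstar x]; simp [hgsx]
          rw [hsub, hxt, h2e, ← ENNReal.ofReal_add (by positivity) hη0]
          refine ENNReal.ofReal_le_ofReal ?_
          have := neg_abs_le (η x - ηn x)
          nlinarith [this]
        · exact le_add_self
    _ = 2 * (∫⁻ x, ENNReal.ofReal |η x - ηn x| ∂lam)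
          + ∫⁻ x, (if gstar x then 1 - f x else f x) ∂lam := by
        rw [lintegral_add_left hmabs, lintegral_const_mul _ hm']
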